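/- arXiv:2107.13915 — 2 statements merged into one kernel-verified Lean document; each statement's English description precedes it below -/
import Mathlib

section
/- For a field F with at least 4 elements, the expression C(x) = [x] + ⟨−1⟩[1−x] + ⟨⟨1−x⟩⟩ψ₁(x) in the refined pre-Bloch group RP(F) is independent of x; i.e., C(x) = C(y) for all x, y ∈ F \ {0,1}. -/
open scoped Classical

variable (F : Type) [Field F]

/-- The subgroup of squares in `F^×`. -/
def sqSubgroup : Subgroup Fˣ := MonoidHom.range (powMonoidHom 2 : Fˣ →* Fˣ)

/-- The square class group `F^×/(F^×)²`. -/
def SqClassGroup : Type := Fˣ ⧸ sqSubgroup F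

instance : CommGroup (SqClassGroup F) := inferInstanceAs (CommGroup (Fˣ ⧸ sqSubgroup F))

/-- The group ring `R_F = ℤ[F^×/(F^×)²]`. -/
abbrev GrpRing := MonoidAlgebra ℤ (SqClassGroup F)

/-- `⟨x⟩ ∈ R_F`, the square class of `x ∈ F^×` (with the junk convention `⟨0⟩ = 1`). -/
noncomputable def cls (x : F) : GrpRing F :=
  if h : x = 0 then 1
  else MonoidAlgebra.of ℤ (SqClassGroup F)
    (QuotientGroup.mk (Units.mk0 x h) : Fˣ ⧸ sqSubgroup F)

/-- The relators of the refined pre-Bloch group: `[0]`, `[1]` and the refined five-term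
relators `S_{x,y}`, inside the free `R_F`-module on the set `F` of generator labels. -/
noncomputable def refinedRels : Set (F →₀ GrpRing F) :=
  {Finsupp.single (0 : F) 1, Finsupp.single (1 : F) 1} ∪
  {z | ∃ x y : F, x ≠ 0 ∧ x ≠ 1 ∧ y ≠ 0 ∧ y ≠ 1 ∧ x ≠ y ∧
    z = Finsupp.single x 1 - Finsupp.single y 1
        + Finsupp.single (y / x) (cls F x)
        - Finsupp.single ((1 - x⁻¹) / (1 - y⁻¹)) (cls F (x⁻¹ - 1))
        + Finsupp.single ((1 - x) / (1 - y)) (cls F (1 - x))}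

/-- The refined pre-Bloch group `RP(F)`: the `R_F`-module with generators `[x]`, `x ∈ F^×`,
subject to `[1] = 0` and the refined five-term relations `S_{x,y}`. -/
abbrev RP := (F →₀ GrpRing F) ⧸ Submodule.span (GrpRing F) (refinedRels F)

/-- The generator `[x]` of `RP(F)`. -/
noncomputable def gen (x : F) : RP F :=
  Submodule.Quotient.mk (Finsupp.single x 1)

/-- `ψ₁(x) = [x] + ⟨-1⟩[x⁻¹]`. -/
noncomputable def psi1 (x : F) : RP F := gen F x + cls F (-1) • gen F x⁻¹

/-- `ψ₂(x) = ⟨x⁻¹-1⟩[x] + ⟨1-x⟩[x⁻¹]` for `x ≠ 1`, and `ψ₂(1) = 0`. -/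
noncomputable def psi2 (x : F) : RP F :=
  if x = 1 then 0 else cls F (x⁻¹ - 1) • gen F x + cls F (1 - x) • gen F x⁻¹


/-- The expression `C(x) = [x] + ⟨-1⟩[1-x] + ⟨⟨1-x⟩⟩ψ₁(x)` in `RP(F)`. -/
noncomputable def Cexpr (x : F) : RP F :=
  gen F x + cls F (-1) • gen F (1 - x) + (cls F (1 - x) - 1) • psi1 F x

/-! ### Auxiliary lemmas -/

lemma cls_one : cls F 1 = 1 := by
  rw [cls, dif_neg one_ne_zero]
  have h : Units.mk0 (1 : F) one_ne_zero = 1 := by ext; rfl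
  rw [h, QuotientGroup.mk_one]; exact map_one (MonoidAlgebra.of ℤ (SqClassGroup F))

lemma cls_mul (a b : F) (ha : a ≠ 0) (hb : b ≠ 0) :
    cls F (a * b) = cls F a * cls F b := by
  rw [cls, cls, cls, dif_neg (mul_ne_zero ha hb), dif_neg ha, dif_neg hb,
    Units.mk0_mul a b (mul_ne_zero ha hb), QuotientGroup.mk_mul]; exact map_mul (MonoidAlgebra.of ℤ (SqClassGroup F)) _ _

lemma cls_mul_self (a : F) (ha : a ≠ 0) : cls F a * cls F a = 1 := by
  rw [cls, dif_neg ha]; erw [← map_mul, ← QuotientGroup.mk_mul]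
  have h : ((Units.mk0 a ha * Units.mk0 a ha : Fˣ) : Fˣ ⧸ sqSubgroup F) = 1 := by
    rw [QuotientGroup.eq_one_iff]
    exact ⟨Units.mk0 a ha, by simp [powMonoidHom, sq]⟩
  rw [h]; exact map_one _

lemma cls_inv (a : F) : cls F a⁻¹ = cls F a := by
  by_cases ha : a = 0
  · rw [ha, inv_zero]
  · calc cls F a⁻¹ = cls F a⁻¹ * (cls F a * cls F a) := by
          rw [cls_mul_self F a ha, mul_one]
      _ = cls F (a⁻¹ * a) * cls F a := by
          rw [cls_mul F a⁻¹ a (inv_ne_zero ha) ha]; ring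
      _ = cls F a := by rw [inv_mul_cancel₀ ha, cls_one, one_mul]

lemma cls_div (a b : F) (ha : a ≠ 0) (hb : b ≠ 0) :
    cls F (a / b) = cls F a * cls F b := by
  rw [div_eq_mul_inv, cls_mul F a b⁻¹ ha (inv_ne_zero hb), cls_inv]

lemma cls_neg (a : F) (ha : a ≠ 0) : cls F (-a) = cls F (-1) * cls F a := by
  rw [show (-a : F) = -1 * a by ring, cls_mul F (-1) a (by norm_num) ha]

/-- The refined five-term relation, in `RP(F)`. -/
lemma rel (a b : F) (ha0 : a ≠ 0) (ha1 : a ≠ 1) (hb0 : b ≠ 0) (hb1 : b ≠ 1) (hab : a ≠ b) :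
    gen F a - gen F b + cls F a • gen F (b / a)
      - cls F (a⁻¹ - 1) • gen F ((1 - a⁻¹) / (1 - b⁻¹))
      + cls F (1 - a) • gen F ((1 - a) / (1 - b)) = 0 := by
  have hmem : (Finsupp.single a 1 - Finsupp.single b 1
      + Finsupp.single (b / a) (cls F a)
      - Finsupp.single ((1 - a⁻¹) / (1 - b⁻¹)) (cls F (a⁻¹ - 1))
      + Finsupp.single ((1 - a) / (1 - b)) (cls F (1 - a)) : F →₀ GrpRing F)
      ∈ Submodule.span (GrpRing F) (refinedRels F) :=
    Submodule.subset_span (Or.inr ⟨a, b, ha0, ha1, hb0, hb1, hab, rfl⟩)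
  have h0 := (Submodule.Quotient.mk_eq_zero _).mpr hmem
  have hs : ∀ (l : F) (c : GrpRing F),
      (Submodule.Quotient.mk (Finsupp.single l c) : RP F) = c • gen F l := by
    intro l c
    rw [gen, ← Submodule.Quotient.mk_smul, Finsupp.smul_single', mul_one]
  simp only [Submodule.Quotient.mk_add, Submodule.Quotient.mk_sub, hs, one_smul] at h0
  exact h0

/-- The `ψ₁`-relation: `ψ₁(a) - ψ₁(b) + ⟨a⟩ψ₁(b/a) = 0`. -/
lemma psi_rel (a b : F) (ha0 : a ≠ 0) (ha1 : a ≠ 1) (hb0 : b ≠ 0) (hb1 : b ≠ 1)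
    (hab : a ≠ b) :
    psi1 F a - psi1 F b + cls F a • psi1 F (b / a) = 0 := by
  have hA : (1 : F) - a ≠ 0 := sub_ne_zero.mpr (Ne.symm ha1)
  have h1 := rel F a b ha0 ha1 hb0 hb1 hab
  have h2 := rel F a⁻¹ b⁻¹ (inv_ne_zero ha0) (by simpa using ha1) (inv_ne_zero hb0)
    (by simpa using hb1) (fun h => hab (inv_injective h))
  rw [inv_inv, inv_inv] at h2
  rw [show b⁻¹ / a⁻¹ = (b / a)⁻¹ from (inv_div_inv b a).trans (inv_div b a).symm] at h2
  rw [show (a⁻¹ - 1 : F) = (1 - a) / a from by field_simp] at h1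
  rw [cls_div F (1 - a) a hA ha0] at h1
  rw [cls_inv] at h2
  rw [show cls F (a - 1) = cls F (-1) * cls F (1 - a) from by
        rw [show (a - 1 : F) = -(1 - a) by ring, cls_neg F (1 - a) hA]] at h2
  rw [show cls F (1 - a⁻¹) = cls F (-1) * (cls F (1 - a) * cls F a) from by
        rw [show (1 - a⁻¹ : F) = -((1 - a) / a) from by field_simp; ring,
          cls_neg F ((1 - a) / a) (div_ne_zero hA ha0), cls_div F (1 - a) a hA ha0]] at h2
  have h2' := congrArg (fun z => cls F (-1) • z) h2
  simp only [smul_add, smul_sub, smul_smul, smul_zero] at h2'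
  have hMM : cls F (-1 : F) * cls F (-1) = 1 := cls_mul_self F (-1) (by norm_num)
  rw [show cls F (-1 : F) * (cls F (-1) * cls F (1 - a)) = cls F (1 - a) from by
        rw [← mul_assoc, hMM, one_mul],
      show cls F (-1 : F) * (cls F (-1) * (cls F (1 - a) * cls F a))
          = cls F (1 - a) * cls F a from by rw [← mul_assoc, hMM, one_mul]] at h2'
  simp only [psi1]
  linear_combination (norm := module) h1 + h2'

/-- The generic case of the main theorem. -/
lemma Cexpr_eq_aux (x y : F) (hx0 : x ≠ 0) (hx1 : x ≠ 1) (hy0 : y ≠ 0) (hy1 : y ≠ 1)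
    (hxy : x ≠ y) (ht1 : y * ((1 - x) / (1 - y)) ≠ 1) :
    Cexpr F x = Cexpr F y := by
  have hA : (1 : F) - x ≠ 0 := sub_ne_zero.mpr (Ne.symm hx1)
  have hB : (1 : F) - y ≠ 0 := sub_ne_zero.mpr (Ne.symm hy1)
  have hx1' : x - 1 ≠ 0 := sub_ne_zero.mpr hx1
  have hy1' : y - 1 ≠ 0 := sub_ne_zero.mpr hy1
  have hw0 : (1 - x) / (1 - y) ≠ 0 := div_ne_zero hA hB
  have ht0 : y * ((1 - x) / (1 - y)) ≠ 0 := mul_ne_zero hy0 hw0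
  have hw1 : (1 - x) / (1 - y) ≠ 1 := by
    intro h
    rw [div_eq_one_iff_eq hB] at h
    exact hxy (by linear_combination -h)
  have hxt : x ≠ y * ((1 - x) / (1 - y)) := by
    intro h
    apply hxy
    field_simp at h
    linear_combination h
  have hwt : (1 - x) / (1 - y) ≠ y * ((1 - x) / (1 - y)) := by
    intro h
    exact hy1 (mul_right_cancel₀ hw0 (by rw [one_mul, ← h])).symm
  -- S_{x,y}
  have h1 := rel F x y hx0 hx1 hy0 hy1 hxy
  rw [show (x⁻¹ - 1 : F) = (1 - x) / x from by field_simp] at h1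
  rw [cls_div F (1 - x) x hA hx0] at h1
  rw [show (1 - x⁻¹) / (1 - y⁻¹) = y * ((1 - x) / (1 - y)) / x from by
        field_simp; ring] at h1
  -- S_{1-x,1-y}
  have h2 := rel F (1 - x) (1 - y) hA (fun h => hx0 (by linear_combination -h))
    hB (fun h => hy0 (by linear_combination -h))
    (fun h => hxy (by linear_combination -h))
  rw [show (1 - y) / (1 - x) = ((1 - x) / (1 - y))⁻¹ from (inv_div (1 - x) (1 - y)).symm] at h2
  rw [show (1 - (1 - x)⁻¹) / (1 - (1 - y)⁻¹) = (y * ((1 - x) / (1 - y)) / x)⁻¹ from by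
        field_simp; ring_nf; exact mul_inv_cancel_right₀ hy0 x] at h2
  rw [sub_sub_cancel, sub_sub_cancel] at h2
  rw [show x / y = (y / x)⁻¹ from (inv_div y x).symm] at h2
  rw [show ((1 - x)⁻¹ - 1 : F) = x / (1 - x) from by field_simp; ring] at h2
  rw [cls_div F x (1 - x) hx0 hA] at h2
  -- ψ₁-relations
  have h3 := psi_rel F x y hx0 hx1 hy0 hy1 hxy
  have h4 := psi_rel F x (y * ((1 - x) / (1 - y))) hx0 hx1 ht0 ht1 hxt
  have h5 := psi_rel F ((1 - x) / (1 - y)) (y * ((1 - x) / (1 - y))) hw0 hw1 ht0 ht1 hwt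
  rw [mul_div_cancel_right₀ y hw0] at h5
  rw [show cls F ((1 - x) / (1 - y)) = cls F (1 - x) * cls F (1 - y) from
        cls_div F (1 - x) (1 - y) hA hB] at h5
  have h5' := congrArg (fun z => cls F (1 - x) • z) h5
  simp only [smul_add, smul_sub, smul_smul, smul_zero] at h5'
  rw [show cls F ((1:F) - x) * (cls F (1 - x) * cls F (1 - y)) = cls F (1 - y) from by
        rw [← mul_assoc, cls_mul_self F (1 - x) hA, one_mul]] at h5'
  simp only [psi1] at h3 h4 h5'
  simp only [Cexpr, psi1]
  linear_combination (norm := module) h1 + cls F (-1) • h2 - h3 + cls F (1 - x) • h4 - h5'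

/-- For a field `F` with at least 4 elements, the expression
`C(x) = [x] + ⟨-1⟩[1-x] + ⟨⟨1-x⟩⟩ψ₁(x)` in `RP(F)` is independent of `x ∈ F \ {0,1}`. -/
theorem Cexpr_constant (h4 : ∃ s : Finset F, 4 ≤ s.card)
    (x y : F) (hx0 : x ≠ 0) (hx1 : x ≠ 1) (hy0 : y ≠ 0) (hy1 : y ≠ 1) :
    Cexpr F x = Cexpr F y := by
  by_cases hxy : x = y
  · rw [hxy]
  have hA : (1 : F) - x ≠ 0 := sub_ne_zero.mpr (Ne.symm hx1)
  have hB : (1 : F) - y ≠ 0 := sub_ne_zero.mpr (Ne.symm hy1)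
  by_cases hd : y * ((1 - x) / (1 - y)) = 1
  · by_cases hd' : x * ((1 - y) / (1 - x)) = 1
    · -- degenerate case: char 2, y = x⁻¹
      have e1 : y * (1 - x) = 1 - y := by field_simp at hd; linear_combination hd
      have e2 : x * (1 - y) = 1 - x := by field_simp at hd'; linear_combination hd'
      have hchar : (2 : F) = 0 := by
        have h : (2 : F) * (x - y) = 0 := by linear_combination e2 - e1
        rcases mul_eq_zero.mp h with h | h
        · exact h
        · exact absurd (sub_eq_zero.mp h) hxy
      have hxy1 : x * y = 1 := by linear_combination -e1 + (y - 1) * hchar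
      by_cases hz : ∃ z : F, z ≠ 0 ∧ z ≠ 1 ∧ z ≠ x ∧ z ≠ y
      · obtain ⟨z, hz0, hz1, hzx, hzy⟩ := hz
        have hC : (1 : F) - z ≠ 0 := sub_ne_zero.mpr (Ne.symm hz1)
        have c1 : Cexpr F x = Cexpr F z := by
          apply Cexpr_eq_aux F x z hx0 hx1 hz0 hz1 (fun h => hzx h.symm)
          intro h
          apply hzy
          have h' : z * (1 - x) = 1 - z := by field_simp at h; linear_combination h
          have hzx1 : z * x = 1 := by linear_combination -h' + (z - 1) * hchar
          have hzy' : (z - y) * x = 0 := by linear_combination hzx1 - hxy1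
          rcases mul_eq_zero.mp hzy' with h'' | h''
          · exact sub_eq_zero.mp h''
          · exact absurd h'' hx0
        have c2 : Cexpr F z = Cexpr F y := by
          apply Cexpr_eq_aux F z y hz0 hz1 hy0 hy1 hzy
          intro h
          apply hzx
          have h' : y * (1 - z) = 1 - y := by field_simp at h; linear_combination h
          have hyz1 : y * z = 1 := by linear_combination -h' + (y - 1) * hchar
          have hzx' : (z - x) * y = 0 := by linear_combination hyz1 - hxy1
          rcases mul_eq_zero.mp hzx' with h'' | h''
          · exact sub_eq_zero.mp h''
          · exact absurd h'' hy0
        rw [c1, c2]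
      · -- F = {0, 1, x, y}
        push_neg at hz
        have hmem : ∀ z : F, z = 0 ∨ z = 1 ∨ z = x ∨ z = y := by
          intro z
          by_cases h0 : z = 0
          · exact Or.inl h0
          by_cases h1 : z = 1
          · exact Or.inr (Or.inl h1)
          by_cases hx : z = x
          · exact Or.inr (Or.inr (Or.inl hx))
          · exact Or.inr (Or.inr (Or.inr (hz z h0 h1 hx)))
        have hx2 : x * x = y := by
          rcases hmem (x * x) with h | h | h | h
          · exact absurd h (mul_ne_zero hx0 hx0)
          · exfalso
            apply hx1
            have h' : (x - 1) * (x - 1) = 0 := by linear_combination h + (1 - x) * hchar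
            exact sub_eq_zero.mp (mul_self_eq_zero.mp h')
          · exact absurd (mul_left_cancel₀ hx0 (by rw [h, mul_one])) hx1
          · exact h
        have hx3 : x * x * x = 1 := by rw [hx2, mul_comm]; exact hxy1
        have hy2 : y * y = x := by
          calc y * y = (x * x) * (x * x) := by rw [hx2]
            _ = (x * x * x) * x := by ring
            _ = x := by rw [hx3, one_mul]
        have h1mx : (1 : F) - x = y := by
          rcases hmem (1 - x) with h | h | h | h
          · exact absurd h hA
          · exact absurd (by linear_combination -h : x = 0) hx0
          · exfalso
            exact one_ne_zero (by linear_combination h + x * hchar : (1 : F) = 0)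
          · exact h
        have h1my : (1 : F) - y = x := by
          rcases hmem (1 - y) with h | h | h | h
          · exact absurd h hB
          · exact absurd (by linear_combination -h : y = 0) hy0
          · exact h
          · exfalso
            exact one_ne_zero (by linear_combination h + y * hchar : (1 : F) = 0)
        have hclsx : cls F x = 1 := by
          rw [← hy2, cls_mul F y y hy0 hy0]
          exact cls_mul_self F y hy0
        have hclsy : cls F y = 1 := by
          rw [← hx2, cls_mul F x x hx0 hx0]
          exact cls_mul_self F x hx0
        have hclsm : cls F (-1 : F) = 1 := by
          rw [show (-1 : F) = 1 by linear_combination -hchar, cls_one]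
        simp only [Cexpr, h1mx, h1my, hclsm, hclsx, hclsy, sub_self, zero_smul,
          one_smul, add_zero]
        exact add_comm _ _
    · exact (Cexpr_eq_aux F y x hy0 hy1 hx0 hx1 (Ne.symm hxy) hd').symm
  · exact Cexpr_eq_aux F x y hx0 hx1 hy0 hy1 hxy hd
end

section
/- If R is a real quadratically closed field and x ∈ R^× with x > 0, then ⟨−1⟩[x] = [x] in the refined pre-Bloch group RP(R). -/
open scoped Classical

variable (F : Type) [Field F]

section Aux
variable (F : Type) [Field F]

lemma cls_mul_s12 (x y : F) (hx : x ≠ 0) (hy : y ≠ 0) : cls F (x * y) = cls F x * cls F y := by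
  rw [cls, cls, cls, dif_neg (mul_ne_zero hx hy), dif_neg hx, dif_neg hy]
  erw [← map_mul, ← QuotientGroup.mk_mul]
  congr 2
  ext
  simp

lemma cls_sq (a : F) (ha : a ≠ 0) : cls F (a ^ 2) = 1 := by
  rw [cls, dif_neg (pow_ne_zero 2 ha)]
  have h1 : Units.mk0 (a ^ 2) (pow_ne_zero 2 ha) = (powMonoidHom 2 : Fˣ →* Fˣ) (Units.mk0 a ha) := by
    ext; simp [powMonoidHom]
  rw [h1]
  have h2 : (QuotientGroup.mk ((powMonoidHom 2 : Fˣ →* Fˣ) (Units.mk0 a ha)) : Fˣ ⧸ sqSubgroup F) = 1 :=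
    (QuotientGroup.eq_one_iff _).mpr ⟨Units.mk0 a ha, rfl⟩
  rw [h2]; exact map_one _

lemma gen_one : gen F 1 = 0 :=
  (Submodule.Quotient.mk_eq_zero _).mpr (Submodule.subset_span (Or.inl (Or.inr rfl)))

lemma mk_single (z : F) (r : GrpRing F) :
    (Submodule.span (GrpRing F) (refinedRels F)).mkQ (Finsupp.single z r) = r • gen F z := by
  rw [show (Finsupp.single z r : F →₀ GrpRing F) = r • Finsupp.single z 1 by
        rw [Finsupp.smul_single, smul_eq_mul, mul_one], map_smul]
  rfl

lemma gen_rel (x y : F) (hx0 : x ≠ 0) (hx1 : x ≠ 1) (hy0 : y ≠ 0) (hy1 : y ≠ 1) (hxy : x ≠ y) :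
    gen F x - gen F y + cls F x • gen F (y / x)
      - cls F (x⁻¹ - 1) • gen F ((1 - x⁻¹) / (1 - y⁻¹))
      + cls F (1 - x) • gen F ((1 - x) / (1 - y)) = 0 := by
  have hz : (Finsupp.single x 1 - Finsupp.single y 1
        + Finsupp.single (y / x) (cls F x)
        - Finsupp.single ((1 - x⁻¹) / (1 - y⁻¹)) (cls F (x⁻¹ - 1))
        + Finsupp.single ((1 - x) / (1 - y)) (cls F (1 - x)) : F →₀ GrpRing F)
      ∈ Submodule.span (GrpRing F) (refinedRels F) :=
    Submodule.subset_span (Or.inr ⟨x, y, hx0, hx1, hy0, hy1, hxy, rfl⟩)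
  have h0 := (Submodule.Quotient.mk_eq_zero _).mpr hz
  rw [← Submodule.mkQ_apply, map_add, map_sub, map_add, map_sub, mk_single, mk_single,
    mk_single, mk_single, mk_single, one_smul, one_smul] at h0
  exact h0

end Aux

section Ord
variable (R : Type) [Field R] [LinearOrder R] [IsStrictOrderedRing R]

lemma cls_pos (hRQC : ∀ x : R, 0 < x → ∃ a : R, a ^ 2 = x) (x : R) (hx : 0 < x) :
    cls R x = 1 := by
  obtain ⟨a, ha⟩ := hRQC x hx
  have ha0 : a ≠ 0 := by rintro rfl; simp at ha; exact absurd ha.symm hx.ne'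
  rw [← ha, cls_sq R a ha0]

lemma cls_neg_pos (hRQC : ∀ x : R, 0 < x → ∃ a : R, a ^ 2 = x) (x : R) (hx : 0 < x) :
    cls R (-x) = cls R (-1) := by
  rw [show (-x : R) = -1 * x by ring, cls_mul_s12 R (-1) x (by norm_num) hx.ne',
    cls_pos R hRQC x hx, mul_one]

lemma cls_neg_one_sq (hRQC : ∀ x : R, 0 < x → ∃ a : R, a ^ 2 = x) :
    cls R (-1) * cls R (-1) = 1 := by
  rw [← cls_mul_s12 R (-1) (-1) (by norm_num) (by norm_num)]
  norm_num
  exact cls_pos R hRQC 1 one_pos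

end Ord

set_option maxHeartbeats 1000000 in
lemma case1 (R : Type) [Field R] [LinearOrder R] [IsStrictOrderedRing R]
    (hRQC : ∀ x : R, 0 < x → ∃ a : R, a ^ 2 = x)
    (a : R) (h0 : 0 < a) (h1 : a < 1) :
    cls R (-1) • gen R (a ^ 2) = gen R (a ^ 2) := by
  have hc := cls_neg_one_sq R hRQC
  have ha0 : a ≠ 0 := h0.ne'
  have ha1 : a ≠ 1 := h1.ne
  have hi0 : (0:R) < a⁻¹ := inv_pos.mpr h0
  have hi1 : (1:R) < a⁻¹ := by nlinarith [mul_inv_cancel₀ ha0]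
  have hia0 : (a⁻¹ : R) ≠ 0 := hi0.ne'
  have hia1 : (a⁻¹ : R) ≠ 1 := hi1.ne'
  have h1a : (0:R) < 1 - a := by linarith
  have h1ia : (0:R) < a⁻¹ - 1 := by linarith
  have h1pa : (0:R) < 1 + a := by linarith
  have h1pia : (0:R) < 1 + a⁻¹ := by linarith
  have hne1 : (1:R) - a⁻¹ ≠ 0 := by intro h; rw [sub_eq_zero] at h; exact hia1 h.symm
  have hne2 : (1:R) - a ≠ 0 := h1a.ne'
  have hB : gen R a⁻¹ - gen R a + gen R (a ^ 2)
      - cls R (-1) • gen R (-a) + cls R (-1) • gen R (-a⁻¹) = 0 := by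
    have H := gen_rel R a⁻¹ a hia0 hia1 ha0 ha1 (by intro h; rw [h] at hi1; linarith)
    simp only [inv_inv] at H
    rw [show a / a⁻¹ = a ^ 2 by rw [div_eq_mul_inv, inv_inv, sq],
        show (1 - a) / (1 - a⁻¹) = -a by
          rw [div_eq_iff hne1]; linear_combination (-1 : R) * mul_inv_cancel₀ ha0,
        show (1 - a⁻¹) / (1 - a) = -a⁻¹ by
          rw [div_eq_iff hne2]; linear_combination (-1 : R) * mul_inv_cancel₀ ha0,
        cls_pos R hRQC a⁻¹ hi0, one_smul,
        show (a - 1 : R) = -(1 - a) by ring, cls_neg_pos R hRQC (1 - a) h1a,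
        show (1 - a⁻¹ : R) = -(a⁻¹ - 1) by ring,
        cls_neg_pos R hRQC (a⁻¹ - 1) h1ia] at H
    exact H
  have hI : gen R a - gen R (-a) + gen R (-1)
      - gen R (-((1 - a) / (1 + a))) + gen R ((1 - a) / (1 + a)) = 0 := by
    have H := gen_rel R a (-a) ha0 ha1 (neg_ne_zero.mpr ha0) (by intro h; linarith)
      (by intro h; nlinarith)
    rw [show (-a) / a = (-1 : R) by rw [neg_div, div_self ha0],
        show (1 - a⁻¹) / (1 - (-a)⁻¹) = -((1 - a) / (1 + a)) by
          rw [inv_neg, sub_neg_eq_add, ← neg_div, div_eq_div_iff h1pia.ne' h1pa.ne']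
          linear_combination (-2 : R) * mul_inv_cancel₀ ha0,
        show (1 - a) / (1 - -a) = (1 - a) / (1 + a) by rw [sub_neg_eq_add],
        cls_pos R hRQC a h0,
        cls_pos R hRQC (a⁻¹ - 1) h1ia,
        cls_pos R hRQC (1 - a) h1a, one_smul, one_smul, one_smul] at H
    exact H
  have hL : gen R a⁻¹ - gen R (-a⁻¹) + gen R (-1)
      - cls R (-1) • gen R ((1 - a) / (1 + a))
      + cls R (-1) • gen R (-((1 - a) / (1 + a))) = 0 := by
    have H := gen_rel R a⁻¹ (-a⁻¹) hia0 hia1 (neg_ne_zero.mpr hia0)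
      (by intro h; linarith) (by intro h; nlinarith)
    simp only [inv_inv, inv_neg, sub_neg_eq_add] at H
    rw [show (-a⁻¹) / a⁻¹ = (-1 : R) by rw [neg_div, div_self hia0],
        show (1 - a⁻¹) / (1 + a⁻¹) = -((1 - a) / (1 + a)) by
          rw [← neg_div, div_eq_div_iff h1pia.ne' h1pa.ne']
          linear_combination (-2 : R) * mul_inv_cancel₀ ha0,
        cls_pos R hRQC a⁻¹ hi0, one_smul,
        show (a - 1 : R) = -(1 - a) by ring, cls_neg_pos R hRQC (1 - a) h1a,
        show (1 - a⁻¹ : R) = -(a⁻¹ - 1) by ring,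
        cls_neg_pos R hRQC (a⁻¹ - 1) h1ia] at H
    exact H
  have key : gen R (a ^ 2) = (1 + cls R (-1)) • (gen R (-a) - gen R (-a⁻¹)
      - gen R ((1 - a) / (1 + a)) + gen R (-((1 - a) / (1 + a)))) := by
    have E : gen R (a ^ 2) - (1 + cls R (-1)) • (gen R (-a) - gen R (-a⁻¹)
        - gen R ((1 - a) / (1 + a)) + gen R (-((1 - a) / (1 + a))))
      = (gen R a⁻¹ - gen R a + gen R (a ^ 2)
          - cls R (-1) • gen R (-a) + cls R (-1) • gen R (-a⁻¹))
        + (gen R a - gen R (-a) + gen R (-1)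
          - gen R (-((1 - a) / (1 + a))) + gen R ((1 - a) / (1 + a)))
        - (gen R a⁻¹ - gen R (-a⁻¹) + gen R (-1)
          - cls R (-1) • gen R ((1 - a) / (1 + a))
          + cls R (-1) • gen R (-((1 - a) / (1 + a)))) := by module
    rw [hB, hI, hL] at E
    rw [add_zero, sub_zero] at E
    exact sub_eq_zero.mp E
  rw [key, smul_smul, show cls R (-1) * (1 + cls R (-1)) = 1 + cls R (-1) by
    rw [mul_add, mul_one, hc, add_comm]]

set_option maxHeartbeats 1000000 in
lemma case2 (R : Type) [Field R] [LinearOrder R] [IsStrictOrderedRing R]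
    (hRQC : ∀ x : R, 0 < x → ∃ a : R, a ^ 2 = x)
    (a : R) (h1 : 1 < a) :
    cls R (-1) • gen R (a ^ 2) = gen R (a ^ 2) := by
  have hc := cls_neg_one_sq R hRQC
  have h0 : (0:R) < a := lt_trans one_pos h1
  have ha0 : a ≠ 0 := h0.ne'
  have ha1 : a ≠ 1 := h1.ne'
  have hi0 : (0:R) < a⁻¹ := inv_pos.mpr h0
  have hi1 : a⁻¹ < 1 := by nlinarith [mul_inv_cancel₀ ha0]
  have hia0 : (a⁻¹ : R) ≠ 0 := hi0.ne'
  have hia1 : (a⁻¹ : R) ≠ 1 := hi1.ne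
  have h1a : (0:R) < a - 1 := by linarith
  have h1ia : (0:R) < 1 - a⁻¹ := by linarith
  have h1pa : (0:R) < 1 + a := by linarith
  have h1pia : (0:R) < 1 + a⁻¹ := by linarith
  have hne1 : (1:R) - a⁻¹ ≠ 0 := h1ia.ne'
  have hne2 : (1:R) - a ≠ 0 := by intro h; rw [sub_eq_zero] at h; exact ha1 h.symm
  -- the element [a⁻¹] is fixed by ⟨-1⟩, by case1 applied to a square root of a⁻¹
  have hA' : cls R (-1) • gen R a⁻¹ = gen R a⁻¹ := by
    obtain ⟨r, hr⟩ := hRQC a⁻¹ hi0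
    have hr0 : r ≠ 0 := by rintro rfl; rw [← hr] at hi0; simp at hi0
    have hr2 : |r| ^ 2 = a⁻¹ := by rw [sq_abs, hr]
    have hrpos : 0 < |r| := abs_pos.mpr hr0
    have hrlt : |r| < 1 := by nlinarith [abs_nonneg r]
    have := case1 R hRQC |r| hrpos hrlt
    rwa [hr2] at this
  have hA2 : gen R a - gen R a⁻¹ + gen R ((a ^ 2)⁻¹)
      - cls R (-1) • gen R (-a⁻¹) + cls R (-1) • gen R (-a) = 0 := by
    have H := gen_rel R a a⁻¹ ha0 ha1 hia0 hia1 (by intro h; rw [← h] at hi1; linarith)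
    simp only [inv_inv] at H
    rw [show a⁻¹ / a = (a ^ 2)⁻¹ by rw [sq, mul_inv, div_eq_mul_inv],
        show (1 - a⁻¹) / (1 - a) = -a⁻¹ by
          rw [div_eq_iff hne2]; linear_combination (-1 : R) * mul_inv_cancel₀ ha0,
        show (1 - a) / (1 - a⁻¹) = -a by
          rw [div_eq_iff hne1]; linear_combination (-1 : R) * mul_inv_cancel₀ ha0,
        cls_pos R hRQC a h0, one_smul,
        show (a⁻¹ - 1 : R) = -(1 - a⁻¹) by ring, cls_neg_pos R hRQC (1 - a⁻¹) h1ia,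
        show (1 - a : R) = -(a - 1) by ring, cls_neg_pos R hRQC (a - 1) h1a] at H
    exact H
  have hB2 : gen R a⁻¹ - gen R a + gen R (a ^ 2) - gen R (-a) + gen R (-a⁻¹) = 0 := by
    have H := gen_rel R a⁻¹ a hia0 hia1 ha0 ha1 (by intro h; rw [h] at hi1; linarith)
    simp only [inv_inv] at H
    rw [show a / a⁻¹ = a ^ 2 by rw [div_eq_mul_inv, inv_inv, sq],
        show (1 - a) / (1 - a⁻¹) = -a by
          rw [div_eq_iff hne1]; linear_combination (-1 : R) * mul_inv_cancel₀ ha0,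
        show (1 - a⁻¹) / (1 - a) = -a⁻¹ by
          rw [div_eq_iff hne2]; linear_combination (-1 : R) * mul_inv_cancel₀ ha0,
        cls_pos R hRQC a⁻¹ hi0, one_smul,
        cls_pos R hRQC (a - 1) h1a, one_smul,
        cls_pos R hRQC (1 - a⁻¹) h1ia, one_smul] at H
    exact H
  have hI2 : gen R a - gen R (-a) + gen R (-1)
      - cls R (-1) • gen R ((a - 1) / (1 + a))
      + cls R (-1) • gen R (-((a - 1) / (1 + a))) = 0 := by
    have H := gen_rel R a (-a) ha0 ha1 (neg_ne_zero.mpr ha0) (by intro h; linarith)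
      (by intro h; nlinarith)
    rw [show (-a) / a = (-1 : R) by rw [neg_div, div_self ha0],
        show (1 - a⁻¹) / (1 - (-a)⁻¹) = (a - 1) / (1 + a) by
          rw [inv_neg, sub_neg_eq_add, div_eq_div_iff h1pia.ne' h1pa.ne']
          linear_combination (-2 : R) * mul_inv_cancel₀ ha0,
        show (1 - a) / (1 - -a) = -((a - 1) / (1 + a)) by
          rw [sub_neg_eq_add, ← neg_div]; ring_nf,
        cls_pos R hRQC a h0, one_smul,
        show (a⁻¹ - 1 : R) = -(1 - a⁻¹) by ring, cls_neg_pos R hRQC (1 - a⁻¹) h1ia,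
        show (1 - a : R) = -(a - 1) by ring, cls_neg_pos R hRQC (a - 1) h1a] at H
    exact H
  have hL2 : gen R a⁻¹ - gen R (-a⁻¹) + gen R (-1)
      - gen R (-((a - 1) / (1 + a))) + gen R ((a - 1) / (1 + a)) = 0 := by
    have H := gen_rel R a⁻¹ (-a⁻¹) hia0 hia1 (neg_ne_zero.mpr hia0)
      (by intro h; linarith) (by intro h; nlinarith)
    simp only [inv_inv, inv_neg, sub_neg_eq_add] at H
    rw [show (-a⁻¹) / a⁻¹ = (-1 : R) by rw [neg_div, div_self hia0],
        show (1 - a) / (1 + a) = -((a - 1) / (1 + a)) by rw [← neg_div]; ring_nf,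
        show (1 - a⁻¹) / (1 + a⁻¹) = (a - 1) / (1 + a) by
          rw [div_eq_div_iff h1pia.ne' h1pa.ne']
          linear_combination (-2 : R) * mul_inv_cancel₀ ha0,
        cls_pos R hRQC a⁻¹ hi0, one_smul,
        cls_pos R hRQC (a - 1) h1a, one_smul,
        cls_pos R hRQC (1 - a⁻¹) h1ia, one_smul] at H
    exact H
  have hM : gen R (-a) - gen R (-a⁻¹) + cls R (-1) • gen R ((a ^ 2)⁻¹)
      - cls R (-1) • gen R a⁻¹ + gen R a = 0 := by
    have H := gen_rel R (-a) (-a⁻¹) (neg_ne_zero.mpr ha0) (by intro h; linarith)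
      (neg_ne_zero.mpr hia0) (by intro h; linarith) (by intro h; nlinarith)
    simp only [inv_neg, inv_inv, sub_neg_eq_add] at H
    rw [show (-a⁻¹) / (-a) = (a ^ 2)⁻¹ by rw [neg_div_neg_eq, sq, mul_inv, div_eq_mul_inv],
        show (1 + a⁻¹) / (1 + a) = a⁻¹ by
          rw [div_eq_iff h1pa.ne']; linear_combination (-1 : R) * mul_inv_cancel₀ ha0,
        show (1 + a) / (1 + a⁻¹) = a by
          rw [div_eq_iff h1pia.ne']; linear_combination (-1 : R) * mul_inv_cancel₀ ha0,
        cls_neg_pos R hRQC a h0,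
        show (-a⁻¹ - 1 : R) = -(a⁻¹ + 1) by ring,
        cls_neg_pos R hRQC (a⁻¹ + 1) (by linarith),
        cls_pos R hRQC (1 + a) h1pa, one_smul] at H
    exact H
  have key : gen R (a ^ 2) = -((1 + cls R (-1)) • (gen R ((a ^ 2)⁻¹) + gen R (-a)
      - gen R (-a⁻¹) + gen R ((a - 1) / (1 + a)) - gen R (-((a - 1) / (1 + a))))) := by
    have E : gen R (a ^ 2) + (gen R a⁻¹ - cls R (-1) • gen R a⁻¹)
        + (1 + cls R (-1)) • (gen R ((a ^ 2)⁻¹) + gen R (-a)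
          - gen R (-a⁻¹) + gen R ((a - 1) / (1 + a)) - gen R (-((a - 1) / (1 + a))))
      = (gen R a - gen R a⁻¹ + gen R ((a ^ 2)⁻¹)
          - cls R (-1) • gen R (-a⁻¹) + cls R (-1) • gen R (-a))
        + (gen R a⁻¹ - gen R a + gen R (a ^ 2) - gen R (-a) + gen R (-a⁻¹))
        - (gen R a - gen R (-a) + gen R (-1)
          - cls R (-1) • gen R ((a - 1) / (1 + a))
          + cls R (-1) • gen R (-((a - 1) / (1 + a))))
        + (gen R a⁻¹ - gen R (-a⁻¹) + gen R (-1)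
          - gen R (-((a - 1) / (1 + a))) + gen R ((a - 1) / (1 + a)))
        + (gen R (-a) - gen R (-a⁻¹) + cls R (-1) • gen R ((a ^ 2)⁻¹)
          - cls R (-1) • gen R a⁻¹ + gen R a) := by module
    rw [hA2, hB2, hI2, hL2, hM, hA'] at E
    simp only [add_zero, sub_zero, zero_add, sub_self] at E
    exact eq_neg_of_add_eq_zero_left E
  rw [key, smul_neg, smul_smul, show cls R (-1) * (1 + cls R (-1)) = 1 + cls R (-1) by
    rw [mul_add, mul_one, hc, add_comm]]


/-- If `R` is a real quadratically closed field and `x > 0`, then `⟨-1⟩[x] = [x]` in the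
refined pre-Bloch group `RP(R)`. -/
theorem cls_neg_one_smul_gen_pos (R : Type) [Field R] [LinearOrder R] [IsStrictOrderedRing R]
    (hRQC : ∀ x : R, 0 < x → ∃ a : R, a ^ 2 = x)
    (x : R) (hx : 0 < x) :
    cls R (-1) • gen R x = gen R x := by
  rcases lt_trichotomy x 1 with h | h | h
  · obtain ⟨a, ha⟩ := hRQC x hx
    have ha0 : a ≠ 0 := by rintro rfl; rw [← ha] at hx; simp at hx
    have h2 : |a| ^ 2 = x := by rw [sq_abs, ha]
    have hpos : 0 < |a| := abs_pos.mpr ha0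
    have hlt : |a| < 1 := by nlinarith [abs_nonneg a]
    rw [← h2]
    exact case1 R hRQC |a| hpos hlt
  · rw [h, gen_one, smul_zero]
  · obtain ⟨a, ha⟩ := hRQC x hx
    have ha0 : a ≠ 0 := by rintro rfl; rw [← ha] at hx; simp at hx
    have h2 : |a| ^ 2 = x := by rw [sq_abs, ha]
    have hgt : 1 < |a| := by nlinarith [abs_nonneg a]
    rw [← h2]
    exact case2 R hRQC |a| hgt
end
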